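/- Under condition (G1), for every ξ > 0 the function K1 is differentiable at ξ and, with s = s(ξ), its derivative satisfies K1'(ξ) = − K1(ξ) · g'(s) / (ξ·g'(s) + g(s)²) ≤ 0. -/

import Mathlib

/-- Under condition (G1), the derivative formula for the Forchheimer coefficient:
for every `ξ > 0`, with `s = s(ξ)`,
`K1'(ξ) = − K1(ξ)·g'(s) / (ξ·g'(s) + g(s)²) ≤ 0` (Lemma III.2 of Aulisa et al.). -/
theorem K1_hasDerivAt
    (g g' sol K1 : ℝ → ℝ)
    -- condition (G1)
    (hg_cont : ContinuousOn g (Set.Ici 0))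
    (hg_deriv : ∀ s, 0 < s → HasDerivAt g (g' s) s)
    (hg'_cont : ContinuousOn g' (Set.Ioi 0))
    (hg'_nonneg : ∀ s, 0 < s → 0 ≤ g' s)
    (hg0 : 0 < g 0)
    -- the implicit function s(ξ): the unique nonnegative solution of s·g(s) = ξ
    (hsol : ∀ ξ, 0 ≤ ξ → (0 ≤ sol ξ ∧ sol ξ * g (sol ξ) = ξ))
    -- the Forchheimer coefficient
    (hK1 : ∀ ξ, 0 ≤ ξ → K1 ξ = 1 / g (sol ξ)) :
    ∀ ξ, 0 < ξ →
      HasDerivAt K1 (-(K1 ξ) * g' (sol ξ) / (ξ * g' (sol ξ) + (g (sol ξ)) ^ 2)) ξ ∧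
      -(K1 ξ) * g' (sol ξ) / (ξ * g' (sol ξ) + (g (sol ξ)) ^ 2) ≤ 0 := by
  -- g is monotone on [0, ∞)
  have hg_mono : MonotoneOn g (Set.Ici 0) := by
    apply monotoneOn_of_deriv_nonneg (convex_Ici 0) hg_cont
    · intro x hx
      rw [interior_Ici] at hx
      exact (hg_deriv x hx).differentiableAt.differentiableWithinAt
    · intro x hx
      rw [interior_Ici] at hx
      rw [(hg_deriv x hx).deriv]
      exact hg'_nonneg x hx
  -- g is positive on [0, ∞)
  have hgpos : ∀ s, 0 ≤ s → 0 < g s := fun s hs =>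
    lt_of_lt_of_le hg0 (hg_mono Set.self_mem_Ici hs hs)
  -- F(s) = s * g s is strictly monotone on [0, ∞)
  have hFmono : StrictMonoOn (fun s => s * g s) (Set.Ici 0) := by
    intro a ha b hb hab
    calc a * g a ≤ a * g b := mul_le_mul_of_nonneg_left (hg_mono ha hb hab.le) ha
      _ < b * g b := mul_lt_mul_of_pos_right hab (hgpos b hb)
  have hFmono' : MonotoneOn (fun s => s * g s) (Set.Ici 0) := hFmono.monotoneOn
  intro ξ hξ
  obtain ⟨hs0, hFs⟩ := hsol ξ hξ.le
  set s := sol ξ with hsdef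
  have hspos : 0 < s := by
    rcases eq_or_lt_of_le hs0 with h | h
    · exfalso
      rw [← hFs, ← h] at hξ
      simp at hξ
    · exact h
  -- sol is continuous at ξ
  have hsolcont : ContinuousAt sol ξ := by
    rw [Metric.continuousAt_iff]
    intro ε hε
    set ε' := min ε (s / 2) with hε'def
    have hε'pos : 0 < ε' := lt_min hε (by positivity)
    have hε'le : ε' ≤ ε := min_le_left _ _
    have hsub : 0 ≤ s - ε' := by
      have : ε' ≤ s / 2 := min_le_right _ _
      linarith
    have h1 : (s - ε') * g (s - ε') < ξ := by
      rw [← hFs]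
      exact hFmono hsub hs0 (by linarith)
    have h2 : ξ < (s + ε') * g (s + ε') := by
      rw [← hFs]
      exact hFmono hs0 (Set.mem_Ici.mpr (by linarith)) (by linarith)
    refine ⟨min (ξ - (s - ε') * g (s - ε')) ((s + ε') * g (s + ε') - ξ),
      lt_min (by linarith) (by linarith), ?_⟩
    intro x hx
    rw [Real.dist_eq] at hx ⊢
    have hx' := abs_lt.mp hx
    have hd1 : min (ξ - (s - ε') * g (s - ε')) ((s + ε') * g (s + ε') - ξ) ≤
        ξ - (s - ε') * g (s - ε') := min_le_left _ _
    have hd2 : min (ξ - (s - ε') * g (s - ε')) ((s + ε') * g (s + ε') - ξ) ≤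
        (s + ε') * g (s + ε') - ξ := min_le_right _ _
    have hx1 : (s - ε') * g (s - ε') < x := by linarith [hx'.1]
    have hx2 : x < (s + ε') * g (s + ε') := by linarith [hx'.2]
    have hx0 : 0 ≤ x :=
      le_trans (mul_nonneg hsub (hgpos _ hsub).le) hx1.le
    obtain ⟨hsx0, hFsx⟩ := hsol x hx0
    have ha : s - ε' < sol x := by
      by_contra h
      push_neg at h
      have := hFmono' hsx0 hsub h
      simp only at this
      rw [hFsx] at this
      linarith
    have hb : sol x < s + ε' := by
      by_contra h
      push_neg at h
      have := hFmono' (Set.mem_Ici.mpr (by linarith : (0:ℝ) ≤ s + ε')) hsx0 h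
      simp only at this
      rw [hFsx] at this
      linarith
    have : |sol x - s| < ε' := abs_lt.mpr ⟨by linarith, by linarith⟩
    linarith
  -- F has positive derivative at s
  have hF' : HasDerivAt (fun t => t * g t) (g s + s * g' s) s := by
    have := (hasDerivAt_id s).mul (hg_deriv s hspos)
    simpa only [Pi.mul_def, id_eq, one_mul] using this
  have hF'pos : 0 < g s + s * g' s := by
    have := mul_nonneg hs0 (hg'_nonneg s hspos)
    linarith [hgpos s hs0]
  -- sol has derivative (g s + s * g' s)⁻¹ at ξ
  have hFsol : ∀ᶠ y in nhds ξ, (fun t => t * g t) (sol y) = y :=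
    (eventually_gt_nhds hξ).mono fun y hy => (hsol y hy.le).2
  have hF's : HasDerivAt (fun t => t * g t) (g s + s * g' s) (sol ξ) := hF'
  have hsol_deriv : HasDerivAt sol (g s + s * g' s)⁻¹ ξ :=
    hF's.of_local_left_inverse hsolcont hF'pos.ne' hFsol
  -- K1 has the desired derivative
  have hcomp : HasDerivAt (fun x => g (sol x)) (g' s * (g s + s * g' s)⁻¹) ξ :=
    (hg_deriv s hspos).comp ξ hsol_deriv
  have hinv : HasDerivAt (fun x => (g (sol x))⁻¹)
      (-(g' s * (g s + s * g' s)⁻¹) / (g (sol ξ)) ^ 2) ξ :=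
    hcomp.inv (hgpos s hs0).ne'
  have hKeq : K1 =ᶠ[nhds ξ] fun x => (g (sol x))⁻¹ :=
    (eventually_gt_nhds hξ).mono fun y hy => by rw [hK1 y hy.le, one_div]
  have hK1deriv : HasDerivAt K1 (-(g' s * (g s + s * g' s)⁻¹) / (g s) ^ 2) ξ :=
    hinv.congr_of_eventuallyEq hKeq
  have h1 : g s ≠ 0 := (hgpos s hs0).ne'
  have hden : 0 < ξ * g' s + (g s) ^ 2 := by
    have := mul_nonneg hξ.le (hg'_nonneg s hspos)
    nlinarith [hgpos s hs0]
  have hval : -(g' s * (g s + s * g' s)⁻¹) / (g s) ^ 2 =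
      -(K1 ξ) * g' s / (ξ * g' s + (g s) ^ 2) := by
    rw [hK1 ξ hξ.le, ← hsdef,
      show ξ * g' s + g s ^ 2 = g s * (g s + s * g' s) by rw [← hFs]; ring]
    have h2 : g s + s * g' s ≠ 0 := hF'pos.ne'
    field_simp
  rw [hval] at hK1deriv
  refine ⟨hK1deriv, ?_⟩
  apply div_nonpos_of_nonpos_of_nonneg _ hden.le
  have : 0 ≤ K1 ξ * g' s := by
    rw [hK1 ξ hξ.le, ← hsdef]
    exact mul_nonneg (div_nonneg zero_le_one (hgpos s hs0).le) (hg'_nonneg s hspos)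
  linarith
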